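/- For every integer d ≥ 2, the average effective resistance of the d-dimensional hypercube satisfies (1/2)·(1/(d+1)) ≤ R_ave(Q_d) ≤ 2/(d+1). -/

import Mathlib

open Real Finset

/-- Average effective resistance of the `d`-dimensional hypercube `Q_d`. -/
noncomputable def RaveHyp (d : ℕ) : ℝ :=
  (1 / 2 ^ d) * ∑ m ∈ Finset.Icc 1 d, (1 / (2 * (m : ℝ))) * (d.choose m)

lemma nat_sum_aux (d : ℕ) :
    ∑ m ∈ Finset.Icc 1 d, (d+1).choose (m+1) + (d + 2) = 2^(d+1) := by
  have h := Nat.sum_range_choose (d+1)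
  have h1 : ∑ i ∈ Finset.range (d+1+1), (d+1).choose i
      = ∑ i ∈ Finset.range (d+1), (d+1).choose (i+1) + (d+1).choose 0 :=
    Finset.sum_range_succ' _ _
  have h2 : ∑ i ∈ Finset.range (d+1), (d+1).choose (i+1)
      = ∑ i ∈ Finset.range d, (d+1).choose (i+1+1) + (d+1).choose (0+1) :=
    Finset.sum_range_succ' _ _
  have h3 : ∑ m ∈ Finset.Icc 1 d, (d+1).choose (m+1)
      = ∑ i ∈ Finset.range d, (d+1).choose (i+1+1) := by
    rw [show Finset.Icc 1 d = Finset.Ico 1 (d+1) from rfl,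
      Finset.sum_Ico_eq_sum_range]
    apply Finset.sum_congr (by simp)
    intro i _
    congr 1
    omega
  rw [h3]
  rw [h1, h2] at h
  simp [Nat.choose_one_right] at h
  omega

lemma two_pow_ge (d : ℕ) (hd : 2 ≤ d) : d + 2 ≤ 2^d := by
  induction d with
  | zero => omega
  | succ n ih =>
    rcases Nat.lt_or_ge n 2 with h | h
    · interval_cases n <;> omega
    · have := ih h
      rw [pow_succ]
      omega

lemma real_sum_aux (d : ℕ) :
    ∑ m ∈ Finset.Icc 1 d, (((d+1).choose (m+1) : ℝ)) = 2^(d+1) - d - 2 := by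
  have h := nat_sum_aux d
  have h' := congrArg (Nat.cast : ℕ → ℝ) h
  push_cast at h'
  linarith

theorem hypercube_bounds (d : ℕ) (hd : 2 ≤ d) :
    (1 / 2) * (1 / ((d : ℝ) + 1)) ≤ RaveHyp d ∧ RaveHyp d ≤ 2 / ((d : ℝ) + 1) := by
  have hd1 : (0:ℝ) < (d:ℝ) + 1 := by positivity
  have hp : (0:ℝ) < 2 ^ d := by positivity
  have hpow : (d:ℝ) + 2 ≤ 2 ^ d := by
    have := two_pow_ge d hd
    have h' := (Nat.cast_le (α := ℝ)).mpr this
    push_cast at h'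
    linarith
  -- per-term identity
  have key : ∀ m ∈ Finset.Icc 1 d,
      ((d:ℝ)+1) * (d.choose m : ℝ) = ((m:ℝ)+1) * ((d+1).choose (m+1) : ℝ) := by
    intro m _
    have := Nat.add_one_mul_choose_eq d m
    have h' := congrArg (Nat.cast : ℕ → ℝ) this
    push_cast at h'
    linarith
  set S : ℝ := ∑ m ∈ Finset.Icc 1 d, (1 / (2 * (m : ℝ))) * (d.choose m) with hS
  have hub : S ≤ (2^(d+1) - (d:ℝ) - 2) / ((d:ℝ)+1) := by
    rw [← real_sum_aux d, Finset.sum_div, hS]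
    apply Finset.sum_le_sum
    intro m hm
    have hm1 : (1:ℝ) ≤ (m:ℝ) := by
      have := (Finset.mem_Icc.mp hm).1
      exact_mod_cast this
    have hc : (0:ℝ) ≤ (d.choose m : ℝ) := by positivity
    have hk := key m hm
    rw [one_div, inv_mul_eq_div, div_le_div_iff₀ (by linarith) (by linarith)]
    nlinarith
  have hlb : (2^(d+1) - (d:ℝ) - 2) / (2 * ((d:ℝ)+1)) ≤ S := by
    rw [← real_sum_aux d, Finset.sum_div, hS]
    apply Finset.sum_le_sum
    intro m hm
    have hm1 : (1:ℝ) ≤ (m:ℝ) := by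
      have := (Finset.mem_Icc.mp hm).1
      exact_mod_cast this
    have hc : (0:ℝ) ≤ (d.choose m : ℝ) := by positivity
    have hk := key m hm
    rw [one_div, inv_mul_eq_div, div_le_div_iff₀ (by linarith) (by linarith)]
    nlinarith
  have hR : RaveHyp d = (1 / 2 ^ d) * S := rfl
  have h2d : (2:ℝ)^(d+1) = 2 * 2 ^ d := by ring
  have hub' : S * ((d:ℝ)+1) ≤ 2^(d+1) - (d:ℝ) - 2 := (le_div_iff₀ hd1).mp hub
  have hlb' : 2^(d+1) - (d:ℝ) - 2 ≤ S * (2*((d:ℝ)+1)) :=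
    (div_le_iff₀ (by positivity)).mp hlb
  have hd0 : (0:ℝ) ≤ (d:ℝ) := by positivity
  constructor
  · rw [hR, div_mul_div_comm, one_mul, one_div (2^d : ℝ), inv_mul_eq_div,
      div_le_div_iff₀ (by positivity) hp]
    nlinarith
  · rw [hR, one_div (2^d : ℝ), inv_mul_eq_div, div_le_div_iff₀ hp hd1]
    nlinarith
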